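/- Let d₁ > κ > 1, d₁ ≥ … ≥ d_N, suppose u* ∈ (1, d₁) is a minimizer of G₁(u) = Σ h_i(u)² with G₁ differentiable at u*, and let α be the smallest index with v_α < u* and β the largest index with v_β/κ > u*, where v = (d₁,…,d_{N̄}, 1) lists the eigenvalues greater than 1 followed by 1. Then u* = (Σ_{i=1}^{β} κ d_i + Σ_{i=α}^{N} d_i) / (N - α + 1 + β κ²). -/

import Mathlib

open Filter Asymptotics

lemma sq_deriv_zero (f : ℝ → ℝ) (x K : ℝ) (hfx : f x = 0)
    (hb : ∀ u, |f u| ≤ K * (u - x) ^ 2) : HasDerivAt f 0 x := by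
  rw [hasDerivAt_iff_isLittleO]
  simp only [hfx, sub_zero, smul_zero]
  have h1 : (fun u : ℝ => f u) =O[nhds x] fun u => K * (u - x) ^ 2 := by
    apply Asymptotics.isBigO_of_le
    intro u
    calc |f u| ≤ K * (u - x) ^ 2 := hb u
      _ ≤ |K * (u - x) ^ 2| := le_abs_self _
      _ = ‖K * (u - x) ^ 2‖ := rfl
  have h2 : (fun u : ℝ => K * (u - x) ^ 2) =o[nhds x] fun u => u - x := by
    have heq : (fun u : ℝ => K * (u - x) ^ 2) = fun u => (K * (u - x)) * (u - x) := by
      ext u; ring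
    rw [heq]
    have ht : Tendsto (fun u : ℝ => K * (u - x)) (nhds x) (nhds 0) := by
      have hc : Continuous (fun u : ℝ => K * (u - x)) := by continuity
      have := hc.tendsto x
      simpa using this
    have hlo := (Asymptotics.isLittleO_one_iff ℝ).mpr ht
    simpa using hlo.mul_isBigO (Asymptotics.isBigO_refl (fun u : ℝ => u - x) (nhds x))
  exact h1.trans_isLittleO h2


set_option maxHeartbeats 2000000 in
/-- Stationarity characterization of the interior optimum of the Frobenius-norm
reduced problem (Theorem 2, case 4).  Indices are 0-based: `a = α - 1`,
`b = β - 1` with respect to the 1-based indices of the paper, and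
`v 0 = d₁, …, v (N̄-1) = d_{N̄}, v N̄ = 1`. -/
theorem G1_interior_optimum_formula (N : ℕ) (hN : 0 < N) (d : ℕ → ℝ) (κ : ℝ)
    (hκ : 1 < κ) (hd1 : κ < d 0)
    (hdec : ∀ i j, i ≤ j → j < N → d j ≤ d i)
    (G : ℝ → ℝ)
    (hG : ∀ u, G u = ∑ i ∈ Finset.range N,
      (|min (κ * u) (max (d i) (max 1 u)) - d i|) ^ 2)
    (Nbar : ℕ)
    (hNbar : Nbar = ((Finset.range N).filter (fun i => 1 < d i)).card)
    (v : ℕ → ℝ)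
    (hv : ∀ i < Nbar, v i = d i) (hvN : v Nbar = 1)
    (ustar : ℝ) (hu : ustar ∈ Set.Ioo 1 (d 0))
    (hmin : ∀ u ∈ Set.Ici (1 / κ), G ustar ≤ G u)
    (hdiff : DifferentiableAt ℝ G ustar)
    (a b : ℕ)
    (ha : a ≤ Nbar) (hva : v a < ustar) (ha_small : ∀ j < a, ¬ v j < ustar)
    (hb : b ≤ Nbar) (hvb : ustar < v b / κ)
    (hb_large : ∀ j ≤ Nbar, ustar < v j / κ → j ≤ b) :
    ustar = (∑ i ∈ Finset.range (b + 1), κ * d i + ∑ i ∈ Finset.Ico a N, d i) /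
      ((N : ℝ) - a + (b + 1) * κ ^ 2) := by
  obtain ⟨hu1, hud⟩ := hu
  have hκ0 : (0:ℝ) < κ := lt_trans one_pos hκ
  have hNbarN : Nbar ≤ N := by
    rw [hNbar]
    exact (Finset.card_filter_le _ _).trans (by simp)
  have hbNbar : b < Nbar := by
    rcases lt_or_eq_of_le hb with h | h
    · exact h
    · exfalso
      rw [h, hvN] at hvb
      have h1 : (1:ℝ)/κ < 1 := by
        rw [div_lt_one hκ0]; exact hκ
      linarith
  have haN : a ≤ N := ha.trans hNbarN
  have hd_le_one : ∀ i, Nbar ≤ i → i < N → d i ≤ 1 := by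
    intro i hi hiN
    by_contra h
    push_neg at h
    have hsub : Finset.range (i+1) ⊆ (Finset.range N).filter (fun j => 1 < d j) := by
      intro j hj
      simp only [Finset.mem_range] at hj
      simp only [Finset.mem_filter, Finset.mem_range]
      exact ⟨by omega, lt_of_lt_of_le h (hdec j i (by omega) hiN)⟩
    have hcard := Finset.card_le_card hsub
    rw [Finset.card_range, ← hNbar] at hcard
    omega
  have huκ : ustar < κ * ustar := by nlinarith
  -- d i > κ * ustar for i ≤ b
  have F1 : ∀ i ≤ b, κ * ustar < d i := by
    intro i hi
    have hvb' : v b = d b := hv b hbNbar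
    have h1 : κ * ustar < d b := by
      rw [← hvb']
      have := (lt_div_iff₀ hκ0).mp hvb
      linarith [this]
    exact lt_of_lt_of_le h1 (hdec i b hi (lt_of_lt_of_le hbNbar hNbarN))
  have hba : b < a := by
    by_contra h
    push_neg at h
    have hva' : v a = d a := hv a (lt_of_le_of_lt h hbNbar)
    have h1 : κ * ustar < d a := F1 a h
    rw [hva'] at hva
    linarith
  -- d i < ustar for a ≤ i < N
  have F2 : ∀ i, a ≤ i → i < N → d i < ustar := by
    intro i hai hiN
    by_cases hi : i < Nbar
    · have hva' : v a = d a := hv a (lt_of_le_of_lt hai hi)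
      rw [hva'] at hva
      exact lt_of_le_of_lt (hdec a i hai hiN) hva
    · push_neg at hi
      exact lt_of_le_of_lt (hd_le_one i hi hiN) hu1
  -- ustar ≤ d i ≤ κ * ustar for b < i < a
  have F3 : ∀ i, b < i → i < a → ustar ≤ d i ∧ d i ≤ κ * ustar := by
    intro i hbi hia
    have hiNbar : i < Nbar := lt_of_lt_of_le hia ha
    have hvi : v i = d i := hv i hiNbar
    constructor
    · have := ha_small i hia
      rw [hvi] at this
      linarith [not_lt.mp this]
    · by_contra h
      push_neg at h
      have : ustar < v i / κ := by
        rw [hvi, lt_div_iff₀ hκ0]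
        linarith
      have := hb_large i (le_of_lt hiNbar) this
      omega
  -- the per-term derivatives
  set c : ℕ → ℝ := fun i =>
    if i ≤ b then 2*κ*(κ*ustar - d i) else if a ≤ i then 2*(ustar - d i) else 0 with hc
  have key : ∀ i ∈ Finset.range N,
      HasDerivAt (fun u => (|min (κ * u) (max (d i) (max 1 u)) - d i|) ^ 2) (c i) ustar := by
    intro i hi
    rw [Finset.mem_range] at hi
    by_cases hib : i ≤ b
    · -- case i ≤ b : term is (κ u - d i)^2 near ustar
      have hdi : κ * ustar < d i := F1 i hib
      have hdi0 : 0 < d i := by linarith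
      have hnb : Set.Ioo 1 (d i / κ) ∈ nhds ustar := by
        apply Ioo_mem_nhds hu1
        rw [lt_div_iff₀ hκ0]
        nlinarith
      have hg : HasDerivAt (fun u : ℝ => (κ*u - d i)^2) (c i) ustar := by
        have h1 : HasDerivAt (fun u : ℝ => κ*u - d i) κ ustar := by
          simpa using ((hasDerivAt_id ustar).const_mul κ).sub_const (d i)
        have h2 := h1.fun_pow 2
        refine h2.congr_deriv ?_
        symm
        simp only [hc]
        rw [if_pos hib]
        push_cast
        ring
      apply hg.congr_of_eventuallyEq
      filter_upwards [hnb] with u hu'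
      obtain ⟨h1u, h2u⟩ := hu'
      have hκu : κ * u < d i := by
        rw [lt_div_iff₀ hκ0] at h2u
        nlinarith
      have hudi : u < d i := by nlinarith
      rw [max_eq_right (le_of_lt h1u), max_eq_left (le_of_lt hudi),
        min_eq_left (le_of_lt hκu), sq_abs]
    · by_cases hai : a ≤ i
      · -- case a ≤ i : term is (u - d i)^2 near ustar
        have hdi : d i < ustar := F2 i hai hi
        have hnb : Set.Ioi (max 1 (d i)) ∈ nhds ustar := by
          apply Ioi_mem_nhds
          exact max_lt hu1 hdi
        have hg : HasDerivAt (fun u : ℝ => (u - d i)^2) (c i) ustar := by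
          have h2 := ((hasDerivAt_id ustar).sub_const (d i)).fun_pow 2
          refine h2.congr_deriv ?_
          symm
          simp only [hc]
          rw [if_neg hib, if_pos hai]
          push_cast
          simp only [id_eq]
          ring
        apply hg.congr_of_eventuallyEq
        filter_upwards [hnb] with u hu'
        rw [Set.mem_Ioi, max_lt_iff] at hu'
        obtain ⟨h1u, h2u⟩ := hu'
        have hκu : u ≤ κ * u := by nlinarith
        rw [max_eq_right (le_of_lt h1u), max_eq_right (le_of_lt h2u),
          min_eq_right hκu, sq_abs]
      · -- middle case
        push_neg at hib hai
        obtain ⟨hl, hr⟩ := F3 i hib hai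
        have hnib : ¬ i ≤ b := by omega
        have hnai : ¬ a ≤ i := by omega
        have hci : c i = 0 := by simp only [hc]; rw [if_neg hnib, if_neg hnai]
        rw [hci]
        rcases eq_or_lt_of_le hl with hl' | hl'
        · -- d i = ustar : kink of (max (u - d i) 0)^2
          have hg : HasDerivAt (fun u : ℝ => (max (u - d i) 0)^2) 0 ustar := by
            apply sq_deriv_zero _ _ 1
            · rw [← hl']; simp
            · intro u
              rw [← hl', one_mul, abs_of_nonneg (sq_nonneg _)]
              rcases le_total (u - ustar) 0 with h' | h'
              · rw [max_eq_right h']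
                simpa using sq_nonneg (u - ustar)
              · rw [max_eq_left h']
          apply hg.congr_of_eventuallyEq
          have hnb : Set.Ioi (max 1 (d i / κ)) ∈ nhds ustar := by
            apply Ioi_mem_nhds
            apply max_lt hu1
            rw [div_lt_iff₀ hκ0]
            nlinarith
          filter_upwards [hnb] with u hu'
          rw [Set.mem_Ioi, max_lt_iff] at hu'
          obtain ⟨h1u, h2u⟩ := hu'
          have hκu : d i < κ * u := by
            rw [div_lt_iff₀ hκ0] at h2u
            nlinarith
          have huu : u ≤ κ * u := by nlinarith
          rw [max_eq_right (le_of_lt h1u),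
            min_eq_right (max_le (le_of_lt hκu) huu), sq_abs]
          rcases le_total u (d i) with h' | h'
          · rw [max_eq_left h', max_eq_right (by linarith : u - d i ≤ 0)]
            simp
          · rw [max_eq_right h', max_eq_left (by linarith : (0:ℝ) ≤ u - d i)]
        · rcases eq_or_lt_of_le hr with hr' | hr'
          · -- d i = κ * ustar : kink of (min (κ u - d i) 0)^2
            have hg : HasDerivAt (fun u : ℝ => (min (κ*u - d i) 0)^2) 0 ustar := by
              apply sq_deriv_zero _ _ (κ^2)
              · rw [hr']; simp
              · intro u
                rw [abs_of_nonneg (sq_nonneg _)]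
                have hbd : (min (κ*u - d i) 0)^2 ≤ (κ*u - d i)^2 := by
                  rcases le_total (κ*u - d i) 0 with h' | h'
                  · rw [min_eq_left h']
                  · rw [min_eq_right h']
                    simpa using sq_nonneg (κ*u - d i)
                have heq2 : (κ*u - d i)^2 = κ^2 * (u - ustar)^2 := by
                  rw [hr']; ring
                linarith
            apply hg.congr_of_eventuallyEq
            have hnb : Set.Ioo 1 (d i) ∈ nhds ustar := by
              apply Ioo_mem_nhds hu1
              linarith
            filter_upwards [hnb] with u hu'
            obtain ⟨h1u, h2u⟩ := hu'
            have h1di : (1:ℝ) ≤ d i := by linarith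
            rw [max_eq_right (le_of_lt h1u), max_eq_left (le_of_lt h2u), sq_abs]
            rcases le_total (κ*u) (d i) with h' | h'
            · rw [min_eq_left h', min_eq_left (by linarith : κ*u - d i ≤ 0)]
            · rw [min_eq_right h', min_eq_right (by linarith : (0:ℝ) ≤ κ*u - d i)]
              simp
          · -- ustar < d i < κ ustar : term locally zero
            have hg : HasDerivAt (fun _ : ℝ => (0:ℝ)) 0 ustar := hasDerivAt_const _ _
            apply hg.congr_of_eventuallyEq
            have hnb : Set.Ioo (max 1 (d i / κ)) (d i) ∈ nhds ustar := by
              apply Ioo_mem_nhds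
              · apply max_lt hu1
                rw [div_lt_iff₀ hκ0]
                nlinarith
              · exact hl'
            filter_upwards [hnb] with u hu'
            obtain ⟨h1u, h2u⟩ := hu'
            rw [max_lt_iff] at h1u
            obtain ⟨h1u', h1u''⟩ := h1u
            have hκu : d i ≤ κ * u := by
              rw [div_lt_iff₀ hκ0] at h1u''
              nlinarith
            have h1di : (1:ℝ) ≤ d i := by linarith
            rw [max_eq_left (max_le h1di (le_of_lt h2u)), min_eq_right hκu]
            simp
  -- derivative of G
  have hsum : HasDerivAt G (∑ i ∈ Finset.range N, c i) ustar := by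
    have hGfun : G = fun u => ∑ i ∈ Finset.range N,
        (|min (κ * u) (max (d i) (max 1 u)) - d i|) ^ 2 := funext hG
    rw [hGfun]
    exact HasDerivAt.fun_sum key
  -- local min gives zero derivative
  have hloc : IsLocalMin G ustar := by
    have h1κ : 1/κ < ustar := by
      have : (1:ℝ)/κ < 1 := by rw [div_lt_one hκ0]; exact hκ
      linarith
    have hmem : Set.Ici (1/κ) ∈ nhds ustar :=
      Filter.mem_of_superset (Ioi_mem_nhds h1κ) Set.Ioi_subset_Ici_self
    have : ∀ᶠ u in nhds ustar, G ustar ≤ G u := by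
      filter_upwards [hmem] with u hu' using hmin u hu'
    exact this
  have hS : ∑ i ∈ Finset.range N, c i = 0 := hloc.hasDerivAt_eq_zero hsum
  -- split the sum
  have hb1a : b + 1 ≤ a := hba
  have hsplit : ∑ i ∈ Finset.range N, c i
      = ∑ i ∈ Finset.range (b+1), (2*κ*(κ*ustar - d i))
        + ∑ i ∈ Finset.Ico a N, (2*(ustar - d i)) := by
    rw [Finset.range_eq_Ico,
      ← Finset.sum_Ico_consecutive _ (Nat.zero_le a) haN,
      ← Finset.sum_Ico_consecutive _ (Nat.zero_le (b+1)) hb1a]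
    have hmid : ∑ i ∈ Finset.Ico (b+1) a, c i = 0 := by
      apply Finset.sum_eq_zero
      intro i hi
      rw [Finset.mem_Ico] at hi
      have h1 : ¬ i ≤ b := by omega
      have h2 : ¬ a ≤ i := by omega
      simp only [hc]
      rw [if_neg h1, if_neg h2]
    rw [hmid, add_zero]
    congr 1
    · rw [← Finset.range_eq_Ico]
      apply Finset.sum_congr rfl
      intro i hi
      rw [Finset.mem_range] at hi
      have h1 : i ≤ b := by omega
      simp only [hc]
      rw [if_pos h1]
    · apply Finset.sum_congr rfl
      intro i hi
      rw [Finset.mem_Ico] at hi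
      have h1 : ¬ i ≤ b := by omega
      have h2 : a ≤ i := hi.1
      simp [hc, h1, h2]
  -- expand the sums
  have e1 : ∑ i ∈ Finset.range (b+1), (2*κ*(κ*ustar - d i))
      = ((b:ℝ)+1) * (2*κ*(κ*ustar)) - 2*κ * ∑ i ∈ Finset.range (b+1), d i := by
    simp only [mul_sub]
    rw [Finset.sum_sub_distrib, Finset.sum_const, Finset.card_range, ← Finset.mul_sum]
    push_cast
    ring
  have e2 : ∑ i ∈ Finset.Ico a N, (2*(ustar - d i))
      = ((N:ℝ) - a) * (2*ustar) - 2 * ∑ i ∈ Finset.Ico a N, d i := by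
    simp only [mul_sub]
    rw [Finset.sum_sub_distrib, Finset.sum_const, Nat.card_Ico, ← Finset.mul_sum]
    rw [nsmul_eq_mul, Nat.cast_sub haN]
  rw [hsplit, e1, e2] at hS
  -- finish
  have hden : (0:ℝ) < (N:ℝ) - a + ((b:ℝ) + 1) * κ ^ 2 := by
    have h1 : (a:ℝ) ≤ (N:ℝ) := by exact_mod_cast haN
    have h2 : (0:ℝ) ≤ (b:ℝ) := Nat.cast_nonneg b
    nlinarith
  have hnum : ∑ i ∈ Finset.range (b+1), κ * d i
      = κ * ∑ i ∈ Finset.range (b+1), d i := by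
    rw [Finset.mul_sum]
  rw [hnum, eq_div_iff (ne_of_gt hden)]
  push_cast
  linear_combination ((1:ℝ)/2) * hS
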